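/- For every n ≥ 1, the set N_n = {μ ∈ P_2(ℝ^d) : μ = Σ_{l=1}^n α_l δ_{x^l} for some α_l ≥ 0 and x^l ∈ ℝ^d} of probability measures supported on at most n points is a closed subset of the 2-Wasserstein space P_2(ℝ^d). -/

import Mathlib

open MeasureTheory
open scoped ENNReal

section Aux

variable {E : Type*} [MetricSpace E] [SecondCountableTopology E] [MeasurableSpace E]
  [BorelSpace E]

lemma aux_spt_null (ν : Measure E) :
    ν {x : E | ∃ r > 0, ν (Metric.ball x r) = 0} = 0 := by
  obtain ⟨T, hTc, hTsub, hTeq⟩ := TopologicalSpace.isOpen_sUnion_countable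
    {u : Set E | IsOpen u ∧ ν u = 0} (fun s hs => hs.1)
  refine measure_mono_null (fun x hx => ?_) (hTeq ▸ (measure_sUnion_null_iff hTc).2
    (fun s hs => (hTsub hs).2))
  obtain ⟨r, hr, h0⟩ := hx
  exact ⟨Metric.ball x r, ⟨Metric.isOpen_ball, h0⟩, Metric.mem_ball_self hr⟩

lemma aux_repr (ν : Measure E) [IsFiniteMeasure ν] (F : Finset E) (hF : ν (↑F : Set E)ᶜ = 0) :
    ν = ∑ y ∈ F, ν {y} • Measure.dirac y := by
  ext s hs
  have hdiff : ν (s \ ↑F) = 0 := measure_mono_null (fun x hx => hx.2) hF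
  have h1 : ν s = ν (s ∩ ↑F) := by
    rw [← measure_inter_add_diff s F.measurableSet, hdiff, add_zero]
  have hU : s ∩ ↑F = ⋃ y ∈ F, s ∩ {y} := by ext z; simp [and_comm]
  have h2 : ν (s ∩ ↑F) = ∑ y ∈ F, ν (s ∩ {y}) := by
    rw [hU]
    exact measure_biUnion_finset
      (fun i _ j hj hij => Set.disjoint_left.2 (fun z hzi hzj => hij
        (hzi.2.symm.trans hzj.2)))
      (fun y _ => hs.inter (measurableSet_singleton y))
  rw [h1, h2]
  rw [Measure.finset_sum_apply]
  refine Finset.sum_congr rfl (fun y _ => ?_)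
  rw [Measure.smul_apply, Measure.dirac_apply' y hs, smul_eq_mul]
  by_cases hy : y ∈ s
  · rw [Set.inter_eq_self_of_subset_right (Set.singleton_subset_iff.2 hy),
      Set.indicator_of_mem hy, Pi.one_apply, mul_one]
  · rw [Set.indicator_of_notMem hy, mul_zero,
      show s ∩ {y} = ∅ by ext z; simp; rintro hz rfl; exact hy hz, measure_empty]

lemma aux_pad (g : E → ℝ≥0∞) (hg : ∀ y, g y ≠ ∞) (F : Finset E) (hne : F.Nonempty)
    {n : ℕ} (hcard : F.card ≤ n) :
    ∃ (α : Fin n → NNReal) (x : Fin n → E),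
      ∑ y ∈ F, g y • Measure.dirac y = ∑ l : Fin n, (α l : ℝ≥0∞) • Measure.dirac (x l) := by
  set m := F.card with hm_def
  have hm : 0 < m := Finset.card_pos.2 hne
  set e : Fin m → E := fun j => ((F.equivFin.symm j : F) : E) with he
  refine ⟨fun l => if h : (l : ℕ) < m then (g (e ⟨l, h⟩)).toNNReal else 0,
    fun l => if h : (l : ℕ) < m then e ⟨l, h⟩ else e ⟨0, hm⟩, ?_⟩
  set G : ℕ → Measure E := fun j => if h : j < m then g (e ⟨j, h⟩) • Measure.dirac (e ⟨j, h⟩) else 0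
    with hG
  have step1 : ∑ l : Fin n,
      ((if h : (l : ℕ) < m then (g (e ⟨l, h⟩)).toNNReal else 0 : NNReal) : ℝ≥0∞) •
        Measure.dirac (if h : (l : ℕ) < m then e ⟨l, h⟩ else e ⟨0, hm⟩)
      = ∑ l : Fin n, G (l : ℕ) := by
    refine Finset.sum_congr rfl (fun l _ => ?_)
    by_cases h : (l : ℕ) < m
    · simp only [hG, dif_pos h, ENNReal.coe_toNNReal (hg _)]
    · simp only [hG, dif_neg h, ENNReal.coe_zero, zero_smul]
  have step2 : ∑ l : Fin n, G (l : ℕ) = ∑ j ∈ Finset.range n, G j :=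
    Fin.sum_univ_eq_sum_range G n
  have step3 : ∑ j ∈ Finset.range n, G j = ∑ j ∈ Finset.range m, G j := by
    refine (Finset.sum_subset (Finset.range_subset_range.2 hcard) (fun j _ hj => ?_)).symm
    simp only [Finset.mem_range, not_lt] at hj
    simp [hG, Nat.not_lt.2 hj]
  have step4 : ∑ j ∈ Finset.range m, G j = ∑ j : Fin m, g (e j) • Measure.dirac (e j) := by
    rw [← Fin.sum_univ_eq_sum_range G m]
    exact Finset.sum_congr rfl (fun j _ => by simp [hG, j.isLt])
  have step5 : ∑ j : Fin m, g (e j) • Measure.dirac (e j)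
      = ∑ y ∈ F, g y • Measure.dirac y := by
    rw [← Finset.sum_coe_sort F (fun y => g y • Measure.dirac y)]
    exact Equiv.sum_comp F.equivFin.symm (fun a : F => g (a : E) • Measure.dirac (a : E))
  rw [step1, step2, step3, step4, step5]

lemma aux_lower (ν : Measure E) {n : ℕ}
    (y : Fin (n + 1) → E)
    {ε : ℝ} (hε : 0 < ε) (hsep : ∀ i j, i ≠ j → 4 * ε ≤ dist (y i) (y j))
    {b : ℝ} (hble : ∀ i, b ≤ (ν (Metric.ball (y i) (ε / 2))).toReal)
    (χ : Measure (E × E)) [IsProbabilityMeasure χ]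
    (α : Fin n → NNReal) (x : Fin n → E)
    (hfst : χ.map Prod.fst = ∑ l, (α l : ℝ≥0∞) • Measure.dirac (x l))
    (hsnd : χ.map Prod.snd = ν)
    (hint : Integrable (fun q : E × E => dist q.1 q.2 ^ 2) χ) :
    b * (ε / 2) ^ 2 ≤ ∫ q, dist q.1 q.2 ^ 2 ∂χ := by
  -- pigeonhole: some `y i` is at distance `> ε` from all atoms
  have hpig : ∃ i, ∀ l, ε < dist (x l) (y i) := by
    by_contra h
    push_neg at h
    choose f hf using h
    have hfinj : Function.Injective f := by
      intro i j hij
      by_contra hne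
      have h1 := hsep i j hne
      have h2 : dist (y i) (y j) ≤ dist (y i) (x (f i)) + dist (x (f j)) (y j) := by
        rw [hij]; exact dist_triangle _ _ _
      have := (hf i); have := (hf j)
      rw [dist_comm] at this
      nlinarith [hf i, hf j, dist_comm (y i) (x (f i)) ▸ hf i]
    have h2 := Fintype.card_le_of_injective f hfinj
    simp only [Fintype.card_fin] at h2
    omega
  obtain ⟨i, hi⟩ := hpig
  set B := Metric.ball (y i) (ε / 2) with hB
  set R := Set.range x with hR
  have hBmeas : MeasurableSet B := Metric.isOpen_ball.measurableSet
  have hRmeas : MeasurableSet R := (Set.finite_range x).measurableSet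
  set Es := (Prod.snd ⁻¹' B) ∩ (Prod.fst ⁻¹' R) with hEs
  have hEmeas : MeasurableSet Es := (measurable_snd hBmeas).inter (measurable_fst hRmeas)
  -- χ of the bad set (first coordinate outside atoms) is zero
  have hbad : χ (Prod.fst ⁻¹' Rᶜ) = 0 := by
    have h1 : χ (Prod.fst ⁻¹' Rᶜ) = (χ.map Prod.fst) Rᶜ :=
      (Measure.map_apply measurable_fst hRmeas.compl).symm
    rw [h1, hfst, Measure.finset_sum_apply]
    refine Finset.sum_eq_zero (fun l _ => ?_)
    rw [Measure.smul_apply, Measure.dirac_apply' _ hRmeas.compl,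
      Set.indicator_of_notMem (by simp [hR]), smul_eq_mul, mul_zero]
  -- lower bound on χ Es
  have hχE : ν B ≤ χ Es := by
    have hsub : Prod.snd ⁻¹' B ⊆ Es ∪ Prod.fst ⁻¹' Rᶜ := by
      intro q hq
      by_cases hq1 : q.1 ∈ R
      · exact Or.inl ⟨hq, hq1⟩
      · exact Or.inr hq1
    calc ν B = χ (Prod.snd ⁻¹' B) := by
          rw [← hsnd, Measure.map_apply measurable_snd hBmeas]
      _ ≤ χ (Es ∪ Prod.fst ⁻¹' Rᶜ) := measure_mono hsub
      _ ≤ χ Es + χ (Prod.fst ⁻¹' Rᶜ) := measure_union_le _ _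
      _ = χ Es := by rw [hbad, add_zero]
  have hbE : b ≤ (χ Es).toReal := by
    refine (hble i).trans (ENNReal.toReal_mono (measure_ne_top χ Es) hχE)
  -- pointwise lower bound on Es
  have hpt : ∀ q ∈ Es, (ε / 2) ^ 2 ≤ dist q.1 q.2 ^ 2 := by
    rintro ⟨q1, q2⟩ ⟨hq2, hq1⟩
    obtain ⟨l, rfl⟩ := hq1
    have h1 : dist q2 (y i) < ε / 2 := hq2
    have h2 : ε < dist (x l) (y i) := hi l
    have h3 : dist (x l) (y i) ≤ dist (x l) q2 + dist q2 (y i) := dist_triangle _ _ _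
    have h4 : ε / 2 ≤ dist (x l) q2 := by linarith
    have : (0:ℝ) ≤ ε / 2 := by linarith
    exact pow_le_pow_left₀ this h4 2
  calc b * (ε / 2) ^ 2 ≤ (ε / 2) ^ 2 * (χ Es).toReal := by
        rw [mul_comm]; exact mul_le_mul_of_nonneg_left hbE (by positivity)
    _ ≤ ∫ q in Es, dist q.1 q.2 ^ 2 ∂χ :=
        by have h := setIntegral_ge_of_const_le hEmeas (measure_ne_top χ Es) hpt hint.integrableOn
           rw [smul_eq_mul, measureReal_def, mul_comm] at h; exact h
    _ ≤ ∫ q, dist q.1 q.2 ^ 2 ∂χ :=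
        setIntegral_le_integral hint (Filter.Eventually.of_forall (fun q => by positivity))

end Aux

/-- Squared 2-Wasserstein distance, defined as the infimum over couplings with
integrable squared distance. -/
noncomputable def W2sq {d : ℕ} (μ ν : Measure (EuclideanSpace ℝ (Fin d))) : ℝ :=
  sInf {r : ℝ | ∃ χ : Measure (EuclideanSpace ℝ (Fin d) × EuclideanSpace ℝ (Fin d)),
    IsProbabilityMeasure χ ∧ χ.map Prod.fst = μ ∧ χ.map Prod.snd = ν ∧
    Integrable (fun q => ‖q.1 - q.2‖ ^ 2) χ ∧ r = ∫ q, ‖q.1 - q.2‖ ^ 2 ∂χ}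

/-- The 2-Wasserstein distance. -/
noncomputable def W2 {d : ℕ} (μ ν : Measure (EuclideanSpace ℝ (Fin d))) : ℝ :=
  Real.sqrt (W2sq μ ν)

/-- the set `N_n` of probability measures supported on at most `n` points is
closed in the 2-Wasserstein space `P_2(ℝ^d)` (stated via sequential closedness). -/
theorem stmt1 {d n : ℕ} (hn : 1 ≤ n)
    (μ : ℕ → Measure (EuclideanSpace ℝ (Fin d))) (ν : Measure (EuclideanSpace ℝ (Fin d)))
    (hμprob : ∀ k, IsProbabilityMeasure (μ k)) (hνprob : IsProbabilityMeasure ν)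
    (hμ2 : ∀ k, Integrable (fun x : EuclideanSpace ℝ (Fin d) => ‖x‖ ^ 2) (μ k))
    (hν2 : Integrable (fun x : EuclideanSpace ℝ (Fin d) => ‖x‖ ^ 2) ν)
    (hatom : ∀ k, ∃ (α : Fin n → NNReal) (x : Fin n → EuclideanSpace ℝ (Fin d)),
        μ k = ∑ l, (α l : ℝ≥0∞) • Measure.dirac (x l))
    (hconv : Filter.Tendsto (fun k => W2 (μ k) ν) Filter.atTop (nhds 0)) :
    ∃ (α : Fin n → NNReal) (x : Fin n → EuclideanSpace ℝ (Fin d)),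
      ν = ∑ l, (α l : ℝ≥0∞) • Measure.dirac (x l) := by
  set E := EuclideanSpace ℝ (Fin d) with hE
  -- support set
  set S : Set E := {x : E | ∀ r > 0, ν (Metric.ball x r) ≠ 0} with hS
  have hnull : ν Sᶜ = 0 := by
    have : Sᶜ = {x : E | ∃ r > 0, ν (Metric.ball x r) = 0} := by
      ext z; simp [hS, not_forall]
    rw [this]
    exact aux_spt_null ν
  by_cases hbig : ∃ t : Finset E, ↑t ⊆ S ∧ t.card = n + 1
  · -- big support: contradiction with convergence
    exfalso
    obtain ⟨t, htS, htcard⟩ := hbig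
    set y : Fin (n + 1) → E := fun i => ((t.equivFin.symm (finCongr htcard.symm i) : t) : E)
      with hy
    have hyinj : Function.Injective y := by
      intro i j hij
      have := t.equivFin.symm.injective (Subtype.val_injective hij)
      exact (finCongr htcard.symm).injective this
    have hyS : ∀ i, y i ∈ S := fun i => htS (t.equivFin.symm (finCongr htcard.symm i)).2
    -- separation
    have h01 : ((⟨0, by omega⟩ : Fin (n + 1)), (⟨1, by omega⟩ : Fin (n + 1)))
        ∈ Finset.univ.offDiag :=
      Finset.mem_offDiag.2 ⟨Finset.mem_univ _, Finset.mem_univ _, by simp [Fin.ext_iff]⟩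
    obtain ⟨p, hp, hpmin⟩ := Finset.exists_min_image Finset.univ.offDiag
      (fun p => dist (y p.1) (y p.2)) ⟨_, h01⟩
    set ε : ℝ := dist (y p.1) (y p.2) / 4 with hε_def
    have hpne : p.1 ≠ p.2 := (Finset.mem_offDiag.1 hp).2.2
    have hε : 0 < ε := by
      have : y p.1 ≠ y p.2 := fun h => hpne (hyinj h)
      have := dist_pos.2 this
      positivity
    have hsep : ∀ i j, i ≠ j → 4 * ε ≤ dist (y i) (y j) := by
      intro i j hij
      have := hpmin (i, j) (Finset.mem_offDiag.2 ⟨Finset.mem_univ _, Finset.mem_univ _, hij⟩)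
      rw [hε_def]; linarith
    -- minimal ball mass
    obtain ⟨i₀, _, hi₀min⟩ := Finset.exists_min_image Finset.univ
      (fun i => (ν (Metric.ball (y i) (ε / 2))).toReal) Finset.univ_nonempty
    set b : ℝ := (ν (Metric.ball (y i₀) (ε / 2))).toReal with hb_def
    have hb : 0 < b := by
      refine ENNReal.toReal_pos (hyS i₀ (ε / 2) (by positivity)) (measure_ne_top ν _)
    have hble : ∀ i, b ≤ (ν (Metric.ball (y i) (ε / 2))).toReal := fun i =>
      hi₀min i (Finset.mem_univ i)
    set B : ℝ := b * (ε / 2) ^ 2 with hB_def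
    have hBpos : 0 < B := by positivity
    -- pick k with W2 small
    rw [Metric.tendsto_atTop] at hconv
    obtain ⟨N, hN⟩ := hconv (Real.sqrt B) (Real.sqrt_pos.2 hBpos)
    have hWk : W2 (μ N) ν < Real.sqrt B := by
      have h := hN N le_rfl
      rw [Real.dist_eq, sub_zero] at h
      exact (abs_lt.1 h).2
    have hWk' : W2sq (μ N) ν < B := by
      by_contra hge
      push_neg at hge
      have := Real.sqrt_le_sqrt hge
      rw [W2] at hWk
      linarith
    -- the admissible set
    set Sset : Set ℝ := {r : ℝ | ∃ χ : Measure (E × E),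
      IsProbabilityMeasure χ ∧ χ.map Prod.fst = μ N ∧ χ.map Prod.snd = ν ∧
      Integrable (fun q => ‖q.1 - q.2‖ ^ 2) χ ∧ r = ∫ q, ‖q.1 - q.2‖ ^ 2 ∂χ} with hSset
    have hbdd : BddBelow Sset := by
      refine ⟨0, fun r hr => ?_⟩
      obtain ⟨χ, _, _, _, _, rfl⟩ := hr
      exact integral_nonneg (fun q => by positivity)
    have hSne : Sset.Nonempty := by
      haveI := hμprob N
      set χ₀ : Measure (E × E) := (μ N).prod ν with hχ₀
      have hmapfst : χ₀.map Prod.fst = μ N := by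
        rw [hχ₀, Measure.map_fst_prod, measure_univ, one_smul]
      have hmapsnd : χ₀.map Prod.snd = ν := by
        rw [hχ₀, Measure.map_snd_prod, measure_univ, one_smul]
      have h1 : Integrable (fun q : E × E => ‖q.1‖ ^ 2) χ₀ := by
        have := (hμ2 N)
        rw [← hmapfst] at this
        exact this.comp_measurable measurable_fst
      have h2 : Integrable (fun q : E × E => ‖q.2‖ ^ 2) χ₀ := by
        have := hν2
        rw [← hmapsnd] at this
        exact this.comp_measurable measurable_snd
      have hg : Integrable (fun q : E × E => 2 * (‖q.1‖ ^ 2 + ‖q.2‖ ^ 2)) χ₀ := by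
        exact (h1.add h2).const_mul 2
      have hintg : Integrable (fun q : E × E => ‖q.1 - q.2‖ ^ 2) χ₀ := by
        refine Integrable.mono' hg
          ((continuous_fst.sub continuous_snd).norm.pow 2).aestronglyMeasurable
          (Filter.Eventually.of_forall (fun q => ?_))
        rw [Real.norm_of_nonneg (by positivity)]
        have h3 : ‖q.1 - q.2‖ ≤ ‖q.1‖ + ‖q.2‖ := norm_sub_le _ _
        have h4 : ‖q.1 - q.2‖ ^ 2 ≤ (‖q.1‖ + ‖q.2‖) ^ 2 :=
          pow_le_pow_left₀ (norm_nonneg _) h3 2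
        nlinarith [sq_nonneg (‖q.1‖ - ‖q.2‖)]
      exact ⟨∫ q, ‖q.1 - q.2‖ ^ 2 ∂χ₀, χ₀, inferInstance, hmapfst, hmapsnd, hintg, rfl⟩
    have hsinf : sInf Sset < B := hWk'
    obtain ⟨r, hrmem, hrB⟩ := (csInf_lt_iff hbdd hSne).1 hsinf
    obtain ⟨χ, hχprob, hχfst, hχsnd, hχint, rfl⟩ := hrmem
    obtain ⟨α, x, hμN⟩ := hatom N
    rw [hμN] at hχfst
    have hdist : (fun q : E × E => ‖q.1 - q.2‖ ^ 2) = fun q : E × E => dist q.1 q.2 ^ 2 := by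
      funext q; rw [dist_eq_norm]
    rw [hdist] at hχint hrB
    have := aux_lower ν y hε hsep hble χ α x hχfst hχsnd hχint
    linarith
  · -- small support: ν is an atomic measure on ≤ n points
    have hSfin : S.Finite := by
      by_contra hinf
      have hinf' : S.Infinite := hinf
      obtain ⟨t, htS, htcard⟩ := hinf'.exists_subset_card_eq (n + 1)
      exact hbig ⟨t, htS, htcard⟩
    set F : Finset E := hSfin.toFinset with hF_def
    have hFS : (↑F : Set E) = S := hSfin.coe_toFinset
    have hcard : F.card ≤ n := by
      by_contra hlt
      push_neg at hlt
      obtain ⟨t, htF, htcard⟩ := Finset.exists_subset_card_eq hlt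
      exact hbig ⟨t, (Finset.coe_subset.2 htF).trans hFS.subset, htcard⟩
    have hFc : ν (↑F : Set E)ᶜ = 0 := by rw [hFS]; exact hnull
    have hne : F.Nonempty := by
      rcases F.eq_empty_or_nonempty with h | h
      · exfalso
        rw [h] at hFc
        simp at hFc
      · exact h
    obtain ⟨α, x, heq⟩ := aux_pad (fun y => ν {y}) (fun y => measure_ne_top ν _) F hne hcard
    exact ⟨α, x, (aux_repr ν F hFc).trans heq⟩
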